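/- Let φ ∈ L²(D) and let u be its harmonic-type extension: u = φ on D and Hu(x) = μ(x)⁻¹∫_D k(x,y)φ(y) dy for x outside the closure of D. Then Ê(Hu, Hu) = (1/2)∬_{D×D}(φ(x)−φ(y))²(k(x,y) + k̂(x,y)) dy dx, where k̂(x,y) = ∫_{D^c} k(x,z)k(z,y)/μ(z) dz. -/

import Mathlib

open MeasureTheory Set
open scoped ENNReal

noncomputable section

abbrev Euc (d : ℕ) := EuclideanSpace ℝ (Fin d)

def muR (d : ℕ) (D : Set (Euc d)) (k : Euc d → Euc d → ℝ) (z : Euc d) : ℝ :=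
  ∫ w in D, k z w

def kappaR (d : ℕ) (D : Set (Euc d)) (k : Euc d → Euc d → ℝ) (x : Euc d) : ℝ :=
  ∫ y in Dᶜ, k x y

/-- `k̂(x,y) = ∫_{Dᶜ} k(x,z)k(z,y)/μ(z) dz` (real-valued). -/
def khatR (d : ℕ) (D : Set (Euc d)) (k : Euc d → Euc d → ℝ) (x y : Euc d) : ℝ :=
  ∫ z in Dᶜ, k x z * k z y / muR d D k z

/-- The energy `Ê(v,v) = (1/2)∬_{D×D}(v(x)-v(y))²k dy dx + ∬_{D×Dᶜ}(v(x)-v(y))²k dy dx`. -/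
def hatEsplit (d : ℕ) (D : Set (Euc d)) (k : Euc d → Euc d → ℝ) (v : Euc d → ℝ) : ℝ :=
  (1 / 2 : ℝ) * (∫ x in D, ∫ y in D, (v x - v y) ^ 2 * k x y) +
    ∫ x in D, ∫ y in Dᶜ, (v x - v y) ^ 2 * k x y

/-- Pointwise key identity: for `y` with `k y ·` integrable on `D` and `μ(y) > 0`,
`∫_D (φ x - c)² k(y,x) dx = (1/2) ∬_{D×D} (φ a - φ b)² k(a,y)k(y,b)/μ(y)`
where `c = μ(y)⁻¹ ∫_D k(y,b) φ(b) db`. -/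
lemma pointwise_key (d : ℕ) (D : Set (Euc d)) (hDm : MeasurableSet D)
    (k : Euc d → Euc d → ℝ)
    (hksymm : ∀ x y, k x y = k y x)
    (φ : Euc d → ℝ) (hφmeas : Measurable φ) (M : ℝ) (hM : ∀ x, |φ x| ≤ M)
    (y : Euc d) (hky : IntegrableOn (fun w => k y w) D volume)
    (hmy : 0 < muR d D k y) :
    ∫ x in D, (φ x - (muR d D k y)⁻¹ * ∫ b in D, k y b * φ b) ^ 2 * k y x =
      (1 / 2 : ℝ) * ∫ p : Euc d × Euc d,
        (φ p.1 - φ p.2) ^ 2 * (k p.1 y * k y p.2 / muR d D k y)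
        ∂((volume.restrict D).prod (volume.restrict D)) := by
  have hI1 : IntegrableOn (fun x => φ x ^ 2 * k y x) D volume :=
    hky.bdd_mul ((hφmeas.pow_const 2).aestronglyMeasurable)
      (c := M ^ 2) (Filter.Eventually.of_forall fun x => by
        rw [Real.norm_eq_abs, abs_pow]
        exact pow_le_pow_left₀ (abs_nonneg _) (hM x) 2)
  have hI2 : IntegrableOn (fun x => φ x * k y x) D volume :=
    hky.bdd_mul hφmeas.aestronglyMeasurable
      (c := M) (Filter.Eventually.of_forall fun x => by rw [Real.norm_eq_abs]; exact hM x)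
  set m := muR d D k y with hmdef
  set S2 := ∫ x in D, φ x ^ 2 * k y x with hS2
  set S1 := ∫ x in D, φ x * k y x with hS1
  have hmint : (∫ x in D, k y x) = m := rfl
  set c := m⁻¹ * ∫ b in D, k y b * φ b with hc
  have hcS1 : c = m⁻¹ * S1 := by
    rw [hc, hS1]
    congr 1
    exact integral_congr_ae (Filter.Eventually.of_forall fun x => mul_comm _ _)
  -- LHS
  have hL : (∫ x in D, (φ x - c) ^ 2 * k y x) = S2 - (2 * c) * S1 + c ^ 2 * m := by
    have e1 : (∫ x in D, (φ x - c) ^ 2 * k y x)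
        = ∫ x in D, ((φ x ^ 2 * k y x - (2 * c) * (φ x * k y x)) + c ^ 2 * k y x) :=
      integral_congr_ae (Filter.Eventually.of_forall fun x => by ring)
    have hsub : Integrable (fun x => φ x ^ 2 * k y x - 2 * c * (φ x * k y x))
        (volume.restrict D) := hI1.sub (hI2.const_mul (2 * c))
    have hsub2 : Integrable (fun x => φ x * k y x) (volume.restrict D) := hI2
    rw [e1, integral_add hsub (hky.const_mul (c ^ 2)),
      integral_sub hI1 (hI2.const_mul (2 * c)), integral_const_mul, integral_const_mul,
      hmint]
  -- RHS
  have hprod1 : Integrable (fun p : Euc d × Euc d => (φ p.1 ^ 2 * k y p.1) * (k y p.2))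
      ((volume.restrict D).prod (volume.restrict D)) := hI1.mul_prod hky
  have hprod2 : Integrable (fun p : Euc d × Euc d => (φ p.1 * k y p.1) * (φ p.2 * k y p.2))
      ((volume.restrict D).prod (volume.restrict D)) := hI2.mul_prod hI2
  have hprod3 : Integrable (fun p : Euc d × Euc d => (k y p.1) * (φ p.2 ^ 2 * k y p.2))
      ((volume.restrict D).prod (volume.restrict D)) := hky.mul_prod hI1
  have hR : (∫ p : Euc d × Euc d,
        (φ p.1 - φ p.2) ^ 2 * (k p.1 y * k y p.2 / m)
        ∂((volume.restrict D).prod (volume.restrict D)))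
      = m⁻¹ * (S2 * m) - 2 * m⁻¹ * (S1 * S1) + m⁻¹ * (m * S2) := by
    have heq : ∀ p : Euc d × Euc d,
        (φ p.1 - φ p.2) ^ 2 * (k p.1 y * k y p.2 / m)
          = (m⁻¹ * ((φ p.1 ^ 2 * k y p.1) * (k y p.2))
              - 2 * m⁻¹ * ((φ p.1 * k y p.1) * (φ p.2 * k y p.2)))
            + m⁻¹ * ((k y p.1) * (φ p.2 ^ 2 * k y p.2)) := by
      intro p; rw [hksymm p.1 y]; ring
    have hsubP : Integrable (fun p : Euc d × Euc d =>
        m⁻¹ * ((φ p.1 ^ 2 * k y p.1) * (k y p.2))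
          - 2 * m⁻¹ * ((φ p.1 * k y p.1) * (φ p.2 * k y p.2)))
        ((volume.restrict D).prod (volume.restrict D)) :=
      (hprod1.const_mul m⁻¹).sub (hprod2.const_mul (2 * m⁻¹))
    have P1 : (∫ p : Euc d × Euc d, (φ p.1 ^ 2 * k y p.1) * (k y p.2)
        ∂((volume.restrict D).prod (volume.restrict D))) = S2 * m :=
      integral_prod_mul (fun a => φ a ^ 2 * k y a) (fun b => k y b)
    have P2 : (∫ p : Euc d × Euc d, (φ p.1 * k y p.1) * (φ p.2 * k y p.2)
        ∂((volume.restrict D).prod (volume.restrict D))) = S1 * S1 :=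
      integral_prod_mul (fun a => φ a * k y a) (fun b => φ b * k y b)
    have P3 : (∫ p : Euc d × Euc d, (k y p.1) * (φ p.2 ^ 2 * k y p.2)
        ∂((volume.restrict D).prod (volume.restrict D))) = m * S2 :=
      integral_prod_mul (fun a => k y a) (fun b => φ b ^ 2 * k y b)
    rw [integral_congr_ae (Filter.Eventually.of_forall heq),
      integral_add hsubP (hprod3.const_mul m⁻¹),
      integral_sub (hprod1.const_mul m⁻¹) (hprod2.const_mul (2 * m⁻¹)),
      integral_const_mul, integral_const_mul, integral_const_mul,
      P1, P2, P3]
  rw [hL, hR, hcS1]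
  have hm0 : m ≠ 0 := ne_of_gt hmy
  field_simp
  ring

/-- for the harmonic-type extension `Hu` of `φ` (equal to `φ` on `D` and to
`μ(x)⁻¹∫_D k(x,y)φ(y)dy` outside the closure of `D`),
`Ê(Hu,Hu) = (1/2)∬_{D×D}(φ(x)−φ(y))²(k(x,y)+k̂(x,y)) dy dx`. -/
theorem statement19 (d : ℕ)
    (D : Set (Euc d)) (hDopen : IsOpen D) (hDne : D.Nonempty)
    (hDbdd : Bornology.IsBounded D) (hbd : volume (frontier D) = 0)
    (k : Euc d → Euc d → ℝ) (hkmeas : Measurable (Function.uncurry k))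
    (hkpos : ∀ x y, 0 < k x y) (hksymm : ∀ x y, k x y = k y x)
    (hkD : ∀ z ∉ closure D, IntegrableOn (fun w => k z w) D volume ∧ 0 < muR d D k z)
    (hkDc : ∀ x ∈ D, IntegrableOn (fun y => k x y) Dᶜ volume)
    (hκInt : IntegrableOn (kappaR d D k) D volume)
    (hkhmarg : ∀ x ∈ D, (∫ y in D, khatR d D k x y) = kappaR d D k x)
    (φ : Euc d → ℝ) (hφmeas : Measurable φ) (hφbdd : ∃ M : ℝ, ∀ x, |φ x| ≤ M)
    (v : Euc d → ℝ) (hvmeas : Measurable v)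
    -- `v = Hu` is the harmonic-type extension of `φ`:
    (hvD : ∀ x ∈ D, v x = φ x)
    (hvDc : ∀ x ∉ closure D, v x = (muR d D k x)⁻¹ * ∫ y in D, k x y * φ y)
    (hvb : ∀ x ∈ frontier D, v x = 0)
    -- absolute convergence of the energy integrals:
    (hE1 : Integrable (fun q : Euc d × Euc d => (φ q.1 - φ q.2) ^ 2 * k q.1 q.2)
      ((volume.restrict D).prod (volume.restrict D)))
    (hE2 : Integrable (fun q : Euc d × Euc d => (v q.1 - v q.2) ^ 2 * k q.1 q.2)
      ((volume.restrict D).prod (volume.restrict Dᶜ))) :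
    hatEsplit d D k v =
      (1 / 2 : ℝ) * ∫ x in D, ∫ y in D,
        (φ x - φ y) ^ 2 * (k x y + khatR d D k x y) := by
  obtain ⟨M, hM⟩ := hφbdd
  have hDm : MeasurableSet D := hDopen.measurableSet
  have hDcm : MeasurableSet (Dᶜ : Set (Euc d)) := hDm.compl
  have hmu_nonneg : ∀ z, 0 ≤ muR d D k z :=
    fun z => setIntegral_nonneg hDm (fun w _ => (hkpos z w).le)
  -- a.e. point of Dᶜ is outside the closure of D
  have haeDc : ∀ᵐ y ∂(volume.restrict (Dᶜ : Set (Euc d))), y ∉ closure D := by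
    have h0 : (volume.restrict (Dᶜ : Set (Euc d))) (closure D) = 0 := by
      rw [Measure.restrict_apply' hDcm]
      have hsub : closure D ∩ (Dᶜ : Set (Euc d)) ⊆ frontier D := by
        intro z hz
        refine ⟨hz.1, ?_⟩
        rw [hDopen.interior_eq]
        exact hz.2
      exact measure_mono_null hsub hbd
    rw [ae_iff]
    simpa using h0
  -- measurability of muR
  have hmuMeas : Measurable (muR d D k) :=
    (hkmeas.stronglyMeasurable.integral_prod_right'
      (ν := volume.restrict D)).measurable
  -- the kernel appearing in the triple integral
  set g : Euc d × Euc d → Euc d → ℝ :=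
    fun p z => (φ p.1 - φ p.2) ^ 2 * (k p.1 z * k z p.2 / muR d D k z) with hg
  have hgnonneg : ∀ p z, 0 ≤ g p z := fun p z =>
    mul_nonneg (sq_nonneg _)
      (div_nonneg (mul_nonneg (hkpos _ _).le (hkpos _ _).le) (hmu_nonneg _))
  -- measurability of G = uncurried g
  have hGmeas : Measurable (fun q : (Euc d × Euc d) × Euc d => g q.1 q.2) := by
    apply Measurable.mul
    · exact ((hφmeas.comp measurable_fst.fst).sub
        (hφmeas.comp measurable_fst.snd)).pow_const 2
    · exact ((hkmeas.comp (measurable_fst.fst.prodMk measurable_snd)).mul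
        (hkmeas.comp (measurable_snd.prodMk measurable_fst.snd))).div
        (hmuMeas.comp measurable_snd)
  -- pointwise (in y) integrability of g · y on D × D
  have hgInt : ∀ y ∉ closure D, Integrable (fun p => g p y)
      ((volume.restrict D).prod (volume.restrict D)) := by
    intro y hy
    obtain ⟨hky, hmy⟩ := hkD y hy
    have hbase : Integrable (fun p : Euc d × Euc d => k p.1 y * k y p.2 / muR d D k y)
        ((volume.restrict D).prod (volume.restrict D)) := by
      have := (hky.mul_const (muR d D k y)⁻¹).mul_prod hky
      refine this.congr (Filter.Eventually.of_forall fun p => ?_)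
      show k y p.1 * (muR d D k y)⁻¹ * k y p.2 = k p.1 y * k y p.2 / muR d D k y
      rw [hksymm p.1 y]
      ring
    refine hbase.bdd_mul (c := (2 * M) ^ 2) ?_ (Filter.Eventually.of_forall fun p => ?_)
    · exact (((hφmeas.comp measurable_fst).sub
        (hφmeas.comp measurable_snd)).pow_const 2).aestronglyMeasurable
    · rw [Real.norm_eq_abs, abs_pow]
      apply pow_le_pow_left₀ (abs_nonneg _)
      have h1 := abs_le.mp (hM p.1)
      have h2 := abs_le.mp (hM p.2)
      rw [abs_le]
      constructor <;> [linarith; linarith]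
  -- H y = inner product-integral
  set H : Euc d → ℝ := fun y => ∫ p, g p y
    ∂((volume.restrict D).prod (volume.restrict D)) with hH
  have hHnonneg : ∀ y, 0 ≤ H y := fun y => integral_nonneg (fun p => hgnonneg p y)
  -- the key pointwise identity
  have hkey : ∀ y ∉ closure D,
      (∫ x in D, (v x - v y) ^ 2 * k x y) = (1 / 2 : ℝ) * H y := by
    intro y hy
    obtain ⟨hky, hmy⟩ := hkD y hy
    have h1 : (∫ x in D, (v x - v y) ^ 2 * k x y)
        = ∫ x in D, (φ x - (muR d D k y)⁻¹ * ∫ b in D, k y b * φ b) ^ 2 * k y x := by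
      apply setIntegral_congr_fun hDm
      intro x hx
      simp only [hvD x hx, hvDc y hy, hksymm x y]
    rw [h1]
    exact pointwise_key d D hDm k hksymm φ hφmeas M hM y hky hmy
  -- W y := inner x-integral, integrable on Dᶜ by hE2
  have hW : Integrable (fun y => ∫ x in D, (v x - v y) ^ 2 * k x y)
      (volume.restrict (Dᶜ : Set (Euc d))) := hE2.integral_prod_right
  have hHint : Integrable H (volume.restrict (Dᶜ : Set (Euc d))) := by
    refine ((hW.const_mul 2).congr ?_)
    filter_upwards [haeDc] with y hy
    have := hkey y hy
    linarith
  -- integrability of the full triple kernel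
  have hGint : Integrable (fun q : (Euc d × Euc d) × Euc d => g q.1 q.2)
      (((volume.restrict D).prod (volume.restrict D)).prod
        (volume.restrict (Dᶜ : Set (Euc d)))) := by
    refine ⟨hGmeas.aestronglyMeasurable, ?_⟩
    refine (hasFiniteIntegral_iff_ofReal
      (Filter.Eventually.of_forall
        fun q : (Euc d × Euc d) × Euc d => hgnonneg q.1 q.2)).mpr ?_
    rw [lintegral_prod_symm _ (hGmeas.aemeasurable.ennreal_ofReal)]
    have hinner : ∀ᵐ y ∂(volume.restrict (Dᶜ : Set (Euc d))),
        (∫⁻ p, ENNReal.ofReal (g p y)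
          ∂((volume.restrict D).prod (volume.restrict D))) = ENNReal.ofReal (H y) := by
      filter_upwards [haeDc] with y hy
      exact (ofReal_integral_eq_lintegral_ofReal (hgInt y hy)
        (Filter.Eventually.of_forall fun p => hgnonneg p y)).symm
    rw [lintegral_congr_ae hinner,
      ← ofReal_integral_eq_lintegral_ofReal hHint
        (Filter.Eventually.of_forall hHnonneg)]
    exact ENNReal.ofReal_lt_top
  -- push the Dᶜ integral inside: ∫_{Dᶜ} H = ∫_P (φ-diff)² khat
  have hkhat : ∀ p : Euc d × Euc d,
      (∫ z in Dᶜ, g p z) = (φ p.1 - φ p.2) ^ 2 * khatR d D k p.1 p.2 := by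
    intro p
    exact integral_const_mul _ _
  have hPkhat : Integrable
      (fun p : Euc d × Euc d => (φ p.1 - φ p.2) ^ 2 * khatR d D k p.1 p.2)
      ((volume.restrict D).prod (volume.restrict D)) :=
    hGint.integral_prod_left.congr (Filter.Eventually.of_forall hkhat)
  have hswap3 : (∫ p, (∫ z in Dᶜ, g p z)
        ∂((volume.restrict D).prod (volume.restrict D)))
      = ∫ z in Dᶜ, H z := integral_integral_swap hGint
  have hPkhat_eq : (∫ p, (φ p.1 - φ p.2) ^ 2 * khatR d D k p.1 p.2
        ∂((volume.restrict D).prod (volume.restrict D)))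
      = ∫ z in Dᶜ, H z := by
    rw [← hswap3]
    exact integral_congr_ae (Filter.Eventually.of_forall fun p => (hkhat p).symm)
  -- second term of the energy
  have hB : (∫ x in D, ∫ y in Dᶜ, (v x - v y) ^ 2 * k x y)
      = (1 / 2 : ℝ) * ∫ z in Dᶜ, H z := by
    rw [integral_integral_swap hE2]
    rw [integral_congr_ae (g := fun y => (1 / 2 : ℝ) * H y) ?_, integral_const_mul]
    filter_upwards [haeDc] with y hy
    exact hkey y hy
  -- first term of the energy
  have hA2 : (∫ p, (φ p.1 - φ p.2) ^ 2 * k p.1 p.2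
        ∂((volume.restrict D).prod (volume.restrict D)))
      = ∫ x in D, ∫ y in D, (φ x - φ y) ^ 2 * k x y := integral_prod _ hE1
  have hA : (∫ x in D, ∫ y in D, (v x - v y) ^ 2 * k x y)
      = ∫ p, (φ p.1 - φ p.2) ^ 2 * k p.1 p.2
        ∂((volume.restrict D).prod (volume.restrict D)) := by
    rw [hA2]
    apply setIntegral_congr_fun hDm
    intro x hx
    apply setIntegral_congr_fun hDm
    intro y hy
    simp only [hvD x hx, hvD y hy]
  -- right-hand side
  have hRHS : (∫ x in D, ∫ y in D, (φ x - φ y) ^ 2 * (k x y + khatR d D k x y))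
      = (∫ p, (φ p.1 - φ p.2) ^ 2 * k p.1 p.2
          ∂((volume.restrict D).prod (volume.restrict D)))
        + ∫ z in Dᶜ, H z := by
    have hsum : Integrable
        (fun p : Euc d × Euc d => (φ p.1 - φ p.2) ^ 2 * (k p.1 p.2 + khatR d D k p.1 p.2))
        ((volume.restrict D).prod (volume.restrict D)) :=
      (hE1.add hPkhat).congr (Filter.Eventually.of_forall fun p => (mul_add _ _ _).symm)
    rw [← integral_prod _ hsum]
    rw [integral_congr_ae (g := fun p : Euc d × Euc d =>
      (φ p.1 - φ p.2) ^ 2 * k p.1 p.2 + (φ p.1 - φ p.2) ^ 2 * khatR d D k p.1 p.2)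
      (Filter.Eventually.of_forall fun p => mul_add _ _ _)]
    rw [integral_add hE1 hPkhat, hPkhat_eq]
  rw [hatEsplit, hA, hB, hRHS]
  ring
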